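/- In the mobility-driven epidemic model, every entry of the state vector is a posynomial in the controls: for each t ≥ 0, each of the four quantities E(t), I(t), A(t), H(t) is given by a posynomial function of the K·t variables consisting of the entries of u(0),…,u(t−1), valid for all positive control sequences. -/
import Mathlib


/-- A posynomial on the positive orthant: a finite sum of one or more monomials
`c_i * ∏_j x_j ^ a_{i,j}` with positive coefficients and real exponents. -/
def IsPosynomial {ι : Type*} [Fintype ι] (f : (ι → ℝ) → ℝ) : Prop :=
  ∃ k : ℕ, 0 < k ∧ ∃ (c : Fin k → ℝ) (a : Fin k → ι → ℝ),
    (∀ i, 0 < c i) ∧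
    ∀ x : ι → ℝ, (∀ j, 0 < x j) → f x = ∑ i, c i * ∏ j, x j ^ a i j

lemma IsPosynomial.const {ι : Type*} [Fintype ι] {c : ℝ} (hc : 0 < c) :
    IsPosynomial (fun _ : ι → ℝ => c) :=
  ⟨1, one_pos, fun _ => c, fun _ _ => 0, fun _ => hc, fun x _ => by
    simp [Real.rpow_zero]⟩

lemma IsPosynomial.add {ι : Type*} [Fintype ι] {f g : (ι → ℝ) → ℝ}
    (hf : IsPosynomial f) (hg : IsPosynomial g) :
    IsPosynomial (fun x => f x + g x) := by
  obtain ⟨k1, hk1, c1, a1, hc1, h1⟩ := hf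
  obtain ⟨k2, hk2, c2, a2, hc2, h2⟩ := hg
  refine ⟨k1 + k2, by positivity, Fin.append c1 c2, Fin.append a1 a2, ?_, ?_⟩
  · intro i
    refine Fin.addCases (fun i => ?_) (fun i => ?_) i <;> simp [hc1, hc2]
  · intro x hx
    show f x + g x = _
    rw [h1 x hx, h2 x hx, Fin.sum_univ_add]
    simp

set_option maxHeartbeats 1000000 in
lemma IsPosynomial.mul {ι : Type*} [Fintype ι] {f g : (ι → ℝ) → ℝ}
    (hf : IsPosynomial f) (hg : IsPosynomial g) :
    IsPosynomial (fun x => f x * g x) := by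
  obtain ⟨k1, hk1, c1, a1, hc1, h1⟩ := hf
  obtain ⟨k2, hk2, c2, a2, hc2, h2⟩ := hg
  refine ⟨k1 * k2, Nat.mul_pos hk1 hk2,
    fun i => c1 (finProdFinEquiv.symm i).1 * c2 (finProdFinEquiv.symm i).2,
    fun i j => a1 (finProdFinEquiv.symm i).1 j + a2 (finProdFinEquiv.symm i).2 j,
    fun i => mul_pos (hc1 _) (hc2 _), ?_⟩
  intro x hx
  show f x * g x = _
  calc f x * g x
      = ∑ i : Fin k1, ∑ i' : Fin k2,
          (c1 i * c2 i') * ∏ j, x j ^ (a1 i j + a2 i' j) := by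
        rw [h1 x hx, h2 x hx, Finset.sum_mul_sum]
        refine Finset.sum_congr rfl fun i _ => Finset.sum_congr rfl fun i' _ => ?_
        have : ∏ j, x j ^ (a1 i j + a2 i' j) =
            (∏ j, x j ^ a1 i j) * (∏ j, x j ^ a2 i' j) := by
          rw [← Finset.prod_mul_distrib]
          exact Finset.prod_congr rfl fun j _ => Real.rpow_add (hx j) _ _
        rw [this]; ring
    _ = ∑ p : Fin k1 × Fin k2,
          (c1 p.1 * c2 p.2) * ∏ j, x j ^ (a1 p.1 j + a2 p.2 j) :=
        by rw [Fintype.sum_prod_type]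
    _ = _ := (Equiv.sum_comp finProdFinEquiv.symm
          (fun p : Fin k1 × Fin k2 =>
            (c1 p.1 * c2 p.2) * ∏ j, x j ^ (a1 p.1 j + a2 p.2 j))).symm

lemma IsPosynomial.comp_inj {ι κ : Type*} [Fintype ι] [Fintype κ] [DecidableEq κ]
    {f : (ι → ℝ) → ℝ} (hf : IsPosynomial f) {e : ι → κ} (he : Function.Injective e) :
    IsPosynomial (fun x : κ → ℝ => f (x ∘ e)) := by
  classical
  obtain ⟨k, hk, c, a, hc, h⟩ := hf
  refine ⟨k, hk, c,
    fun i j' => if hj : ∃ j, e j = j' then a i hj.choose else 0, hc, ?_⟩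
  intro x hx
  show f (x ∘ e) = _
  rw [h (x ∘ e) (fun j => hx (e j))]
  refine Finset.sum_congr rfl fun i _ => ?_
  congr 1
  symm
  calc (∏ j' : κ, x j' ^ (if hj : ∃ j, e j = j' then a i hj.choose else 0))
      = ∏ j' ∈ Finset.univ.image e,
          x j' ^ (if hj : ∃ j, e j = j' then a i hj.choose else 0) := by
        refine (Finset.prod_subset (Finset.subset_univ _) ?_).symm
        intro j' _ hj'
        have hne : ¬ ∃ j, e j = j' := by
          rintro ⟨j, rfl⟩
          exact hj' (Finset.mem_image_of_mem e (Finset.mem_univ j))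
        rw [dif_neg hne, Real.rpow_zero]
    _ = ∏ j : ι, x (e j) ^ (if hj : ∃ j0, e j0 = e j then a i hj.choose else 0) :=
        Finset.prod_image (fun j _ j' _ hjj => he hjj)
    _ = ∏ j : ι, (x ∘ e) j ^ a i j := by
        refine Finset.prod_congr rfl fun j _ => ?_
        have hj : ∃ j0, e j0 = e j := ⟨j, rfl⟩
        rw [dif_pos hj]
        congr 1
        exact congrArg (a i) (he hj.choose_spec)

lemma isPosynomial_beta {ι : Type*} [Fintype ι] [DecidableEq ι] {K : ℕ}
    (θ α : Fin K → ℝ) (j : Fin K → ι) {b : ℝ} (hθ : ∀ k, 0 < θ k) (hb : 0 < b) :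
    IsPosynomial (fun x : ι → ℝ => (∑ k, θ k * x (j k) ^ α k) + b) := by
  refine ⟨K + 1, Nat.succ_pos _, Fin.snoc θ b,
    Fin.snoc (fun k j' => if j' = j k then α k else 0) (fun _ => 0), ?_, ?_⟩
  · intro i
    induction i using Fin.lastCases with
    | last => simpa using hb
    | cast i => simpa using hθ i
  · intro x hx
    show (∑ k, θ k * x (j k) ^ α k) + b = _
    rw [Fin.sum_univ_castSucc]
    simp only [Fin.snoc_castSucc, Fin.snoc_last]
    congr 1
    · apply Finset.sum_congr rfl
      intro k _
      congr 1
      rw [Finset.prod_eq_single (j k)]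
      · simp
      · intro j' _ hne
        rw [if_neg hne, Real.rpow_zero]
      · simp
    · simp [Real.rpow_zero]

/-- The state `(E(t), I(t), A(t), H(t))` of the mobility-driven epidemic model, where
the infection rate at time `t` is `β(t) = Σ_k θ_k (u_k(t))^(α_k) + b`. -/
noncomputable def epiState (K : ℕ) (θ a : Fin K → ℝ)
    (b S0 γA ρEI ρEA ρIR ρIH ρAR ρHR ρHD E0 I0 A0 H0 : ℝ)
    (u : ℕ → Fin K → ℝ) : ℕ → ℝ × ℝ × ℝ × ℝ
  | 0 => (E0, I0, A0, H0)
  | t + 1 =>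
    let s := epiState K θ a b S0 γA ρEI ρEA ρIR ρIH ρAR ρHR ρHD E0 I0 A0 H0 u t
    let β : ℝ := (∑ k, θ k * u t k ^ a k) + b
    ((1 - ρEI - ρEA) * s.1 + S0 * β * (γA * s.2.2.1 + s.2.1),
     (1 - ρIR - ρIH) * s.2.1 + ρEI * s.1,
     (1 - ρAR) * s.2.2.1 + ρEA * s.1,
     (1 - ρHR - ρHD) * s.2.2.2 + ρIH * s.2.1)

/-- The cumulative deaths `D(t)` of the mobility-driven epidemic model:
`D(t+1) = D(t) + α_D ρ_HR H(t)`. -/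
noncomputable def epiD (K : ℕ) (θ a : Fin K → ℝ)
    (b S0 γA ρEI ρEA ρIR ρIH ρAR ρHR ρHD E0 I0 A0 H0 αD D0 : ℝ)
    (u : ℕ → Fin K → ℝ) : ℕ → ℝ
  | 0 => D0
  | t + 1 => epiD K θ a b S0 γA ρEI ρEA ρIR ρIH ρAR ρHR ρHD E0 I0 A0 H0 αD D0 u t +
      αD * ρHR * (epiState K θ a b S0 γA ρEI ρEA ρIR ρIH ρAR ρHR ρHD E0 I0 A0 H0 u t).2.2.2

/-- In the mobility-driven epidemic model, every entry of the state vector is a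
posynomial in the controls: each of `E(t), I(t), A(t), H(t)` is a posynomial function
of the `K·t` control variables (the entries of `u(0), …, u(t-1)`). -/
theorem states_isPosynomial (K : ℕ) (θ a : Fin K → ℝ)
    (b S0 γA ρEI ρEA ρIR ρIH ρAR ρHR ρHD E0 I0 A0 H0 : ℝ)
    (hθ : ∀ k, 0 < θ k) (hb : 0 < b) (hS0 : 0 < S0) (hγA : 0 < γA)
    (hρEI : 0 < ρEI) (hρEA : 0 < ρEA) (hρIR : 0 < ρIR) (hρIH : 0 < ρIH)
    (hρAR : 0 < ρAR) (hρHR : 0 < ρHR) (hρHD : 0 < ρHD)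
    (hEsum : ρEI + ρEA < 1) (hIsum : ρIR + ρIH < 1) (hAsum : ρAR < 1)
    (hHsum : ρHR + ρHD < 1)
    (hE0 : 0 < E0) (hI0 : 0 < I0) (hA0 : 0 < A0) (hH0 : 0 < H0)
    (t : ℕ) :
    ∃ pE pI pA pH : (Fin t × Fin K → ℝ) → ℝ,
      IsPosynomial pE ∧ IsPosynomial pI ∧ IsPosynomial pA ∧ IsPosynomial pH ∧
      ∀ u : ℕ → Fin K → ℝ, (∀ s k, 0 < u s k) →
        (epiState K θ a b S0 γA ρEI ρEA ρIR ρIH ρAR ρHR ρHD E0 I0 A0 H0 u t).1 =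
            pE (fun q => u (q.1 : ℕ) q.2) ∧
        (epiState K θ a b S0 γA ρEI ρEA ρIR ρIH ρAR ρHR ρHD E0 I0 A0 H0 u t).2.1 =
            pI (fun q => u (q.1 : ℕ) q.2) ∧
        (epiState K θ a b S0 γA ρEI ρEA ρIR ρIH ρAR ρHR ρHD E0 I0 A0 H0 u t).2.2.1 =
            pA (fun q => u (q.1 : ℕ) q.2) ∧
        (epiState K θ a b S0 γA ρEI ρEA ρIR ρIH ρAR ρHR ρHD E0 I0 A0 H0 u t).2.2.2 =
            pH (fun q => u (q.1 : ℕ) q.2) := by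
    induction t with
  | zero =>
    exact ⟨fun _ => E0, fun _ => I0, fun _ => A0, fun _ => H0,
      .const hE0, .const hI0, .const hA0, .const hH0,
      fun u hu => ⟨rfl, rfl, rfl, rfl⟩⟩
  | succ t ih =>
    obtain ⟨pE, pI, pA, pH, hpE, hpI, hpA, hpH, heval⟩ := ih
    have hcE : (0:ℝ) < 1 - ρEI - ρEA := by linarith
    have hcI : (0:ℝ) < 1 - ρIR - ρIH := by linarith
    have hcA : (0:ℝ) < 1 - ρAR := by linarith
    have hcH : (0:ℝ) < 1 - ρHR - ρHD := by linarith
    have he : Function.Injective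
        (fun q : Fin t × Fin K => ((q.1.castSucc, q.2) : Fin (t+1) × Fin K)) := by
      intro q1 q2 h
      simp only [Prod.mk.injEq] at h
      exact Prod.ext (Fin.castSucc_injective _ h.1) h.2
    have hqE := hpE.comp_inj he
    have hqI := hpI.comp_inj he
    have hqA := hpA.comp_inj he
    have hqH := hpH.comp_inj he
    have hβ : IsPosynomial (fun x : Fin (t+1) × Fin K → ℝ =>
        (∑ k, θ k * x (Fin.last t, k) ^ a k) + b) :=
      isPosynomial_beta θ a (fun k => (Fin.last t, k)) hθ hb
    refine ⟨fun x => (1 - ρEI - ρEA) * pE (x ∘ fun q => (q.1.castSucc, q.2)) +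
              S0 * ((∑ k, θ k * x (Fin.last t, k) ^ a k) + b) *
                (γA * pA (x ∘ fun q => (q.1.castSucc, q.2)) +
                  pI (x ∘ fun q => (q.1.castSucc, q.2))),
            fun x => (1 - ρIR - ρIH) * pI (x ∘ fun q => (q.1.castSucc, q.2)) +
              ρEI * pE (x ∘ fun q => (q.1.castSucc, q.2)),
            fun x => (1 - ρAR) * pA (x ∘ fun q => (q.1.castSucc, q.2)) +
              ρEA * pE (x ∘ fun q => (q.1.castSucc, q.2)),
            fun x => (1 - ρHR - ρHD) * pH (x ∘ fun q => (q.1.castSucc, q.2)) +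
              ρIH * pI (x ∘ fun q => (q.1.castSucc, q.2)),
            ?_, ?_, ?_, ?_, ?_⟩
    · exact ((IsPosynomial.const hcE).mul hqE).add
        (((IsPosynomial.const hS0).mul hβ).mul
          (((IsPosynomial.const hγA).mul hqA).add hqI))
    · exact ((IsPosynomial.const hcI).mul hqI).add ((IsPosynomial.const hρEI).mul hqE)
    · exact ((IsPosynomial.const hcA).mul hqA).add ((IsPosynomial.const hρEA).mul hqE)
    · exact ((IsPosynomial.const hcH).mul hqH).add ((IsPosynomial.const hρIH).mul hqI)
    · intro u hu
      obtain ⟨hE, hI, hA, hH⟩ := heval u hu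
      have hcomp : ((fun q : Fin (t+1) × Fin K => u (q.1 : ℕ) q.2) ∘
          fun q : Fin t × Fin K => ((q.1.castSucc, q.2) : Fin (t+1) × Fin K)) =
          fun q : Fin t × Fin K => u (q.1 : ℕ) q.2 := by
        funext q; simp
      refine ⟨?_, ?_, ?_, ?_⟩ <;>
        simp only [epiState, hcomp, hE, hI, hA, hH, Fin.val_last]
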